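/- Let n ≥ 2. In the root system of type C_n, the minimum, over unordered pairs {α_i, α_j} of distinct simple roots in Π, of the resonant codimension of Π ∖ {α_i, α_j} equals 4n − 4. -/

import Mathlib

namespace Stmt7
open Finset

variable (n : ℕ)

def ee (i : Fin n) : Fin n → ℝ := Pi.single i 1

def al (k : Fin n) : Fin n → ℝ :=
  if h : (k : ℕ) + 1 < n then ee n k - ee n ⟨(k : ℕ) + 1, h⟩ else (2 : ℝ) • ee n k

def Sp' : Set (Fin n → ℝ) :=
  {v | (∃ i j : Fin n, i < j ∧ (v = ee n i - ee n j ∨ v = ee n i + ee n j)) ∨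
    ∃ i : Fin n, v = (2 : ℝ) • ee n i}

def psi (k : Fin n) : (Fin n → ℝ) →ₗ[ℝ] ℝ where
  toFun v := ∑ j ∈ Iic k, v j
  map_add' u v := by simp [Finset.sum_add_distrib]
  map_smul' c v := by simp [Finset.mul_sum]

lemma psi_apply (k : Fin n) (v : Fin n → ℝ) : psi n k v = ∑ j ∈ Iic k, v j := rfl

lemma psi_single (k i : Fin n) : psi n k (ee n i) = if i ≤ k then 1 else 0 := by
  simp [psi_apply, ee, Pi.single_apply, Finset.sum_ite_eq]

def w (k : Fin n) : ℝ := if (k : ℕ) + 1 < n then 1 else 2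

lemma w_pos (k : Fin n) : 0 < w n k := by unfold w; split <;> norm_num

lemma al_apply (k i : Fin n) :
    al n k i = (if i = k then w n k else 0) - (if (i : ℕ) = (k : ℕ) + 1 then 1 else 0) := by
  by_cases h : (k : ℕ) + 1 < n
  · rw [al, dif_pos h, w, if_pos h]
    simp only [Pi.sub_apply, ee, Pi.single_apply]
    have : (i = (⟨(k : ℕ) + 1, h⟩ : Fin n)) ↔ (i : ℕ) = (k : ℕ) + 1 := by
      rw [Fin.ext_iff]
    rw [if_congr this rfl rfl]
  · rw [al, dif_neg h, w, if_neg h]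
    have h2 : ¬ ((i : ℕ) = (k : ℕ) + 1) := by have := i.isLt; omega
    simp only [Pi.smul_apply, ee, Pi.single_apply, h2, if_false, smul_eq_mul, sub_zero]
    split <;> norm_num

lemma psi_al (k j : Fin n) : psi n k (al n j) = if k = j then w n j else 0 := by
  by_cases h : (j : ℕ) + 1 < n
  · rw [al, dif_pos h, w, if_pos h]
    rw [map_sub, psi_single, psi_single]
    simp only [Fin.le_def, Fin.ext_iff, Fin.val_mk]
    split_ifs <;> (try norm_num) <;> omega
  · rw [al, dif_neg h, w, if_neg h]
    rw [map_smul, psi_single]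
    have hk := k.isLt
    simp only [Fin.le_def, Fin.ext_iff, smul_eq_mul]
    split_ifs <;> (try norm_num) <;> omega

lemma al_self (k : Fin n) : al n k k = w n k := by
  rw [al_apply]
  have := k.isLt
  have h2 : ¬ ((k : ℕ) = (k : ℕ) + 1) := by omega
  simp [h2]

lemma al_other {k j : Fin n} (hkj : j ≠ k) : al n k j ≤ 0 := by
  rw [al_apply]
  rw [if_neg hkj]
  split <;> norm_num

lemma al_injective : Function.Injective (al n) := by
  intro j k h
  by_contra hne
  have h1 := congrFun h j
  rw [al_self] at h1
  have h2 : al n k j ≤ 0 := al_other n hne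
  have := w_pos n j
  rw [← h1] at h2
  linarith

lemma sum_repr (v : Fin n → ℝ) : ∑ k, (psi n k v / w n k) • al n k = v := by
  funext i
  have hi := i.isLt
  rw [Finset.sum_apply]
  have hterm : ∀ k : Fin n, ((psi n k v / w n k) • al n k) i
      = (if i = k then psi n k v else 0) - (if (i : ℕ) = (k : ℕ) + 1 then psi n k v else 0) := by
    intro k
    rw [Pi.smul_apply, al_apply, smul_eq_mul, mul_sub]
    congr 1
    · split_ifs with hk
      · rw [div_mul_cancel₀]
        exact (w_pos n k).ne'
      · ring
    · split_ifs with hk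
      · have hw : w n k = 1 := by
          rw [w, if_pos]; omega
        rw [hw]; ring
      · ring
  rw [Finset.sum_congr rfl (fun k _ => hterm k), Finset.sum_sub_distrib]
  rw [Finset.sum_ite_eq Finset.univ i (fun k => psi n k v)]
  rw [if_pos (Finset.mem_univ i)]
  rcases Nat.eq_zero_or_pos (i : ℕ) with h0 | h0
  · have : ∀ k : Fin n, ¬ ((i : ℕ) = (k : ℕ) + 1) := by intro k; omega
    simp only [this, if_false, Finset.sum_const_zero, sub_zero]
    rw [psi_apply]
    have : Iic i = {i} := by
      ext j
      simp only [Finset.mem_Iic, Finset.mem_singleton, Fin.le_def, Fin.ext_iff]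
      omega
    rw [this, Finset.sum_singleton]
  · set i' : Fin n := ⟨(i : ℕ) - 1, by omega⟩ with hi'
    have hcond : ∀ k : Fin n, ((i : ℕ) = (k : ℕ) + 1) ↔ k = i' := by
      intro k; rw [Fin.ext_iff]; simp only [hi']; omega
    have : ∀ k : Fin n, (if (i : ℕ) = (k : ℕ) + 1 then psi n k v else 0)
        = (if k = i' then psi n k v else 0) := by
      intro k; rw [if_congr (hcond k) rfl rfl]
    rw [Finset.sum_congr rfl (fun k _ => this k)]
    rw [Finset.sum_ite_eq' Finset.univ i' (fun k => psi n k v)]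
    rw [if_pos (Finset.mem_univ i')]
    rw [psi_apply, psi_apply]
    have hIic : Iic i = insert i (Iic i') := by
      ext j
      simp only [Finset.mem_Iic, Finset.mem_insert, Fin.le_def, Fin.ext_iff, hi']
      omega
    have hnot : i ∉ Iic i' := by
      simp only [Finset.mem_Iic, Fin.le_def, hi']
      omega
    rw [hIic, Finset.sum_insert hnot]
    ring

lemma span_iff (a b : Fin n) (v : Fin n → ℝ) :
    v ∈ Submodule.span ℝ (Set.range (al n) \ {al n a, al n b}) ↔
      psi n a v = 0 ∧ psi n b v = 0 := by
  constructor
  · intro hv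
    have hle : Set.range (al n) \ {al n a, al n b} ⊆
        ↑(LinearMap.ker (psi n a) ⊓ LinearMap.ker (psi n b)) := by
      rintro x ⟨⟨j, rfl⟩, hx⟩
      simp only [Set.mem_insert_iff, Set.mem_singleton_iff] at hx
      push_neg at hx
      constructor
      · show psi n a (al n j) = 0
        rw [psi_al]
        rw [if_neg]
        intro haj
        exact hx.1 (by rw [haj])
      · show psi n b (al n j) = 0
        rw [psi_al]
        rw [if_neg]
        intro hbj
        exact hx.2 (by rw [hbj])
    have := Submodule.span_le.mpr hle hv
    exact ⟨this.1, this.2⟩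
  · rintro ⟨ha, hb⟩
    rw [← sum_repr n v]
    apply Submodule.sum_mem
    intro k _
    by_cases hk : k = a ∨ k = b
    · rcases hk with rfl | rfl
      · rw [ha, zero_div, zero_smul]; exact Submodule.zero_mem _
      · rw [hb, zero_div, zero_smul]; exact Submodule.zero_mem _
    · push_neg at hk
      apply Submodule.smul_mem
      apply Submodule.subset_span
      refine ⟨⟨k, rfl⟩, ?_⟩
      simp only [Set.mem_insert_iff, Set.mem_singleton_iff]
      push_neg
      exact ⟨fun h => hk.1 (al_injective n h), fun h => hk.2 (al_injective n h)⟩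

def Dm : Finset (Fin n × Fin n) := Finset.univ.filter (fun p => p.1 < p.2)
def Dp : Finset (Fin n × Fin n) := Finset.univ.filter (fun p => p.1 ≤ p.2)

def G : (Fin n × Fin n) ⊕ (Fin n × Fin n) → (Fin n → ℝ) :=
  Sum.elim (fun p => ee n p.1 - ee n p.2) (fun p => ee n p.1 + ee n p.2)

def DD : Finset ((Fin n × Fin n) ⊕ (Fin n × Fin n)) := (Dm n).disjSum (Dp n)

lemma sum_ee (i : Fin n) : ∑ k, ee n i k = 1 := by
  simp [ee, Pi.single_apply]

lemma ee_apply (i k : Fin n) : ee n i k = if k = i then 1 else 0 := Pi.single_apply i 1 k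

lemma ee_inj {i j : Fin n} (h : ee n i = ee n j) : i = j := by
  by_contra hne
  have hh := congrFun h i
  rw [ee_apply, ee_apply, if_pos rfl, if_neg (fun hc : i = j => hne hc)] at hh
  norm_num at hh

lemma sub_eq_sub_inj {i1 j1 i2 j2 : Fin n} (h1 : i1 < j1) (h2 : i2 < j2)
    (h : ee n i1 - ee n j1 = ee n i2 - ee n j2) : i1 = i2 ∧ j1 = j2 := by
  have hii : i1 = i2 := by
    by_contra hne
    have hh := congrFun h i1
    rw [Pi.sub_apply, Pi.sub_apply, ee_apply, ee_apply, ee_apply, ee_apply,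
      if_pos rfl, if_neg (fun hc : i1 = j1 => h1.ne hc),
      if_neg (fun hc : i1 = i2 => hne hc)] at hh
    split_ifs at hh <;> norm_num at hh
  subst hii
  have : ee n j1 = ee n j2 := sub_right_inj.mp h
  exact ⟨rfl, ee_inj n this⟩

lemma add_eq_add_inj {i1 j1 i2 j2 : Fin n} (h1 : i1 ≤ j1) (h2 : i2 ≤ j2)
    (h : ee n i1 + ee n j1 = ee n i2 + ee n j2) : i1 = i2 ∧ j1 = j2 := by
  have hii : i1 = i2 := by
    by_contra hne
    have ha := congrFun h i1
    rw [Pi.add_apply, Pi.add_apply, ee_apply, ee_apply, ee_apply, ee_apply,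
      if_pos rfl, if_neg (fun hc : i1 = i2 => hne hc)] at ha
    have hj2 : i1 = j2 := by
      by_contra hc
      rw [if_neg hc] at ha
      split_ifs at ha <;> norm_num at ha
    have hj1 : ¬ i1 = j1 := by
      intro hc
      rw [if_pos hc, if_pos hj2] at ha
      norm_num at ha
    have hlt : i1 < j1 := lt_of_le_of_ne h1 hj1
    have hA : (i1 : ℕ) < (j1 : ℕ) := hlt
    have hB : (i2 : ℕ) ≤ (j2 : ℕ) := h2
    have hC : (i1 : ℕ) = (j2 : ℕ) := congrArg Fin.val hj2
    have hc1 : ¬ j1 = i2 := by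
      intro hc; have := congrArg Fin.val hc; omega
    have hc2 : ¬ j1 = j2 := by
      intro hc; have := congrArg Fin.val hc; omega
    have hb := congrFun h j1
    rw [Pi.add_apply, Pi.add_apply, ee_apply, ee_apply, ee_apply, ee_apply,
      if_neg (fun hc : j1 = i1 => hj1 hc.symm), if_pos rfl,
      if_neg hc1, if_neg hc2] at hb
    norm_num at hb
  subst hii
  exact ⟨rfl, ee_inj n (add_left_cancel h)⟩

lemma mem_Dm {p : Fin n × Fin n} : p ∈ Dm n ↔ p.1 < p.2 := by simp [Dm]
lemma mem_Dp {p : Fin n × Fin n} : p ∈ Dp n ↔ p.1 ≤ p.2 := by simp [Dp]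

lemma G_injOn : Set.InjOn (G n) (DD n : Set ((Fin n × Fin n) ⊕ (Fin n × Fin n))) := by
  rintro x hx y hy hxy
  rw [Finset.mem_coe] at hx hy
  have hsum : ∀ z : (Fin n × Fin n) ⊕ (Fin n × Fin n),
      ∑ k, G n z k = (match z with | Sum.inl _ => 0 | Sum.inr _ => 2) := by
    rintro (p | p) <;>
      simp [G, Finset.sum_sub_distrib, Finset.sum_add_distrib, sum_ee] <;> norm_num
  have hss := (hsum x).symm.trans ((congrArg (fun v => ∑ k, v k) hxy).trans (hsum y))
  match x, y with
  | Sum.inl p, Sum.inl q =>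
    simp only [G, Sum.elim_inl] at hxy
    rw [DD, Finset.inl_mem_disjSum, mem_Dm] at hx hy
    obtain ⟨h1, h2⟩ := sub_eq_sub_inj n hx hy hxy
    exact congrArg Sum.inl (Prod.ext h1 h2)
  | Sum.inl p, Sum.inr q => norm_num at hss
  | Sum.inr p, Sum.inl q => norm_num at hss
  | Sum.inr p, Sum.inr q =>
    simp only [G, Sum.elim_inr] at hxy
    rw [DD, Finset.inr_mem_disjSum, mem_Dp] at hx hy
    obtain ⟨h1, h2⟩ := add_eq_add_inj n hx hy hxy
    exact congrArg Sum.inr (Prod.ext h1 h2)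

lemma Sp'_im : Sp' n = G n '' ↑(DD n) := by
  ext v
  constructor
  · rintro (⟨i, j, hlt, (rfl | rfl)⟩ | ⟨i, rfl⟩)
    · exact ⟨Sum.inl (i, j), by rw [Finset.mem_coe, DD, Finset.inl_mem_disjSum, mem_Dm]; exact hlt, rfl⟩
    · exact ⟨Sum.inr (i, j), by rw [Finset.mem_coe, DD, Finset.inr_mem_disjSum, mem_Dp]; exact hlt.le, rfl⟩
    · refine ⟨Sum.inr (i, i), by rw [Finset.mem_coe, DD, Finset.inr_mem_disjSum, mem_Dp], ?_⟩
      show ee n i + ee n i = (2 : ℝ) • ee n i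
      rw [two_smul]
  · rintro ⟨(p | p), hp, rfl⟩
    · rw [Finset.mem_coe, DD, Finset.inl_mem_disjSum, mem_Dm] at hp
      exact Or.inl ⟨p.1, p.2, hp, Or.inl rfl⟩
    · rw [Finset.mem_coe, DD, Finset.inr_mem_disjSum, mem_Dp] at hp
      rcases lt_or_eq_of_le hp with hlt | heq
      · exact Or.inl ⟨p.1, p.2, hlt, Or.inr rfl⟩
      · refine Or.inr ⟨p.1, ?_⟩
        show G n (Sum.inr p) = _
        rw [G, Sum.elim_inr, two_smul, heq]

def cM (a b : Fin n) (p : Fin n × Fin n) : Prop :=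
  (p.1 ≤ a ↔ p.2 ≤ a) ∧ (p.1 ≤ b ↔ p.2 ≤ b)

def cP (a b : Fin n) (p : Fin n × Fin n) : Prop := a < p.1 ∧ a < p.2 ∧ b < p.1 ∧ b < p.2

instance (a b : Fin n) : DecidablePred (cM n a b) := fun p => by unfold cM; infer_instance
instance (a b : Fin n) : DecidablePred (cP n a b) := fun p => by unfold cP; infer_instance

lemma psi_G_inl (k : Fin n) (p : Fin n × Fin n) :
    psi n k (G n (Sum.inl p)) = (if p.1 ≤ k then 1 else 0) - (if p.2 ≤ k then 1 else 0) := by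
  show psi n k (ee n p.1 - ee n p.2) = _
  rw [map_sub, psi_single, psi_single]

lemma psi_G_inr (k : Fin n) (p : Fin n × Fin n) :
    psi n k (G n (Sum.inr p)) = (if p.1 ≤ k then 1 else 0) + (if p.2 ≤ k then 1 else 0) := by
  show psi n k (ee n p.1 + ee n p.2) = _
  rw [map_add, psi_single, psi_single]

lemma cond_inl (a b : Fin n) (p : Fin n × Fin n) :
    (psi n a (G n (Sum.inl p)) = 0 ∧ psi n b (G n (Sum.inl p)) = 0) ↔ cM n a b p := by
  rw [psi_G_inl, psi_G_inl, cM]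
  constructor
  · rintro ⟨h1, h2⟩
    constructor
    · split_ifs at h1 <;> (try norm_num at h1) <;> (try norm_num) <;> tauto
    · split_ifs at h2 <;> (try norm_num at h2) <;> (try norm_num) <;> tauto
  · rintro ⟨h1, h2⟩
    constructor
    · split_ifs <;> norm_num <;> tauto
    · split_ifs <;> norm_num <;> tauto

lemma cond_inr (a b : Fin n) (p : Fin n × Fin n) :
    (psi n a (G n (Sum.inr p)) = 0 ∧ psi n b (G n (Sum.inr p)) = 0) ↔ cP n a b p := by
  rw [psi_G_inr, psi_G_inr, cP]
  constructor
  · rintro ⟨h1, h2⟩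
    refine ⟨?_, ?_, ?_, ?_⟩ <;> rw [← not_le] <;> intro hc <;>
      split_ifs at h1 h2 <;> (try norm_num at h1) <;> (try norm_num at h2) <;> tauto
  · rintro ⟨h1, h2, h3, h4⟩
    rw [if_neg (not_le.mpr h1), if_neg (not_le.mpr h2), if_neg (not_le.mpr h3),
      if_neg (not_le.mpr h4)]
    norm_num

def OutF (a b : Fin n) : Finset ((Fin n × Fin n) ⊕ (Fin n × Fin n)) :=
  ((Dm n).filter (fun p => ¬ cM n a b p)).disjSum ((Dp n).filter (fun p => ¬ cP n a b p))

def InM (a b : Fin n) : Finset (Fin n × Fin n) := (Dm n).filter (cM n a b)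
def InP (a b : Fin n) : Finset (Fin n × Fin n) := (Dp n).filter (cP n a b)

lemma outF_subset (a b : Fin n) : OutF n a b ⊆ DD n := by
  intro x hx
  rw [OutF] at hx
  match x with
  | Sum.inl p =>
    rw [Finset.inl_mem_disjSum] at hx
    rw [DD, Finset.inl_mem_disjSum]
    exact (Finset.mem_filter.mp hx).1
  | Sum.inr p =>
    rw [Finset.inr_mem_disjSum] at hx
    rw [DD, Finset.inr_mem_disjSum]
    exact (Finset.mem_filter.mp hx).1

lemma out_set_eq (a b : Fin n) :
    {v | v ∈ Sp' n ∧ v ∉ Submodule.span ℝ (Set.range (al n) \ {al n a, al n b})}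
      = G n '' ↑(OutF n a b) := by
  ext v
  simp only [Set.mem_setOf_eq, Sp'_im, span_iff]
  constructor
  · rintro ⟨⟨x, hx, rfl⟩, hns⟩
    refine ⟨x, ?_, rfl⟩
    rw [Finset.mem_coe] at hx ⊢
    rw [OutF]
    match x with
    | Sum.inl p =>
      rw [DD, Finset.inl_mem_disjSum] at hx
      rw [Finset.inl_mem_disjSum, Finset.mem_filter]
      exact ⟨hx, fun hc => hns ((cond_inl n a b p).mpr hc)⟩
    | Sum.inr p =>
      rw [DD, Finset.inr_mem_disjSum] at hx
      rw [Finset.inr_mem_disjSum, Finset.mem_filter]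
      exact ⟨hx, fun hc => hns ((cond_inr n a b p).mpr hc)⟩
  · rintro ⟨x, hx, rfl⟩
    rw [Finset.mem_coe, OutF] at hx
    match x with
    | Sum.inl p =>
      rw [Finset.inl_mem_disjSum, Finset.mem_filter] at hx
      refine ⟨⟨Sum.inl p, ?_, rfl⟩, fun hc => hx.2 ((cond_inl n a b p).mp hc)⟩
      rw [Finset.mem_coe, DD, Finset.inl_mem_disjSum]
      exact hx.1
    | Sum.inr p =>
      rw [Finset.inr_mem_disjSum, Finset.mem_filter] at hx
      refine ⟨⟨Sum.inr p, ?_, rfl⟩, fun hc => hx.2 ((cond_inr n a b p).mp hc)⟩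
      rw [Finset.mem_coe, DD, Finset.inr_mem_disjSum]
      exact hx.1

lemma out_ncard (a b : Fin n) :
    Set.ncard {v | v ∈ Sp' n ∧ v ∉ Submodule.span ℝ (Set.range (al n) \ {al n a, al n b})}
      = (OutF n a b).card := by
  rw [out_set_eq]
  rw [Set.ncard_image_of_injOn ((G_injOn n).mono (by exact_mod_cast outF_subset n a b))]
  exact Set.ncard_coe_finset _

lemma out_card_split (a b : Fin n) :
    (OutF n a b).card + ((InM n a b).card + (InP n a b).card) = (DD n).card := by
  rw [OutF, Finset.card_disjSum, DD, Finset.card_disjSum, InM, InP]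
  have h1 := Finset.card_filter_add_card_filter_not (s := Dm n) (p := cM n a b)
  have h2 := Finset.card_filter_add_card_filter_not (s := Dp n) (p := cP n a b)
  omega

section Tri
variable {β : Type*} [LinearOrder β] [DecidableEq β]

lemma card_tri (B : Finset β) :
    ((B ×ˢ B).filter (fun p => p.1 < p.2)).card = B.card.choose 2 := by
  classical
  set A := (B ×ˢ B).filter (fun p => p.1 < p.2) with hA
  set C := (B ×ˢ B).filter (fun p => p.2 < p.1) with hC
  have hswap : A.card = C.card := by
    apply Finset.card_bij (fun p _ => Prod.swap p)
    · intro p hp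
      rw [hA, Finset.mem_filter, Finset.mem_product] at hp
      rw [hC, Finset.mem_filter, Finset.mem_product]
      exact ⟨⟨hp.1.2, hp.1.1⟩, hp.2⟩
    · intro p _ q _ h
      exact Prod.swap_injective h
    · intro p hp
      refine ⟨Prod.swap p, ?_, by simp⟩
      rw [hC, Finset.mem_filter, Finset.mem_product] at hp
      rw [hA, Finset.mem_filter, Finset.mem_product]
      exact ⟨⟨hp.1.2, hp.1.1⟩, hp.2⟩
  have hpart := Finset.card_filter_add_card_filter_not
    (s := B ×ˢ B) (p := fun p => p.1 < p.2)
  have hneg : (B ×ˢ B).filter (fun p => ¬ p.1 < p.2) = C ∪ B.diag := by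
    ext p
    rw [Finset.mem_union, hC, Finset.mem_filter, Finset.mem_filter, Finset.mem_diag,
      Finset.mem_product]
    constructor
    · rintro ⟨hp, hnlt⟩
      rcases lt_or_eq_of_le (not_lt.mp hnlt) with h | h
      · exact Or.inl ⟨hp, h⟩
      · exact Or.inr ⟨hp.1, h.symm⟩
    · rintro (⟨hp, hlt⟩ | ⟨hp, he⟩)
      · exact ⟨hp, not_lt.mpr hlt.le⟩
      · exact ⟨⟨hp, he ▸ hp⟩, by rw [← he]; exact lt_irrefl _⟩
  have hdisj : Disjoint C B.diag := by
    rw [Finset.disjoint_left]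
    intro p hp hd
    rw [hC, Finset.mem_filter] at hp
    rw [Finset.mem_diag] at hd
    exact absurd (hd.2 ▸ hp.2) (lt_irrefl _)
  rw [hneg, Finset.card_union_of_disjoint hdisj, Finset.diag_card, ← hswap,
    Finset.card_product] at hpart
  rw [← hA] at hpart
  rw [Nat.choose_two_right]
  have hmul : B.card * (B.card - 1) = B.card * B.card - B.card := by
    cases B.card with
    | zero => rfl
    | succ m => simp [Nat.mul_sub, Nat.mul_succ, Nat.succ_mul]
  omega

lemma card_tri_le (B : Finset β) :
    ((B ×ˢ B).filter (fun p => p.1 ≤ p.2)).card = B.card.choose 2 + B.card := by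
  classical
  have hsplit : (B ×ˢ B).filter (fun p => p.1 ≤ p.2)
      = ((B ×ˢ B).filter (fun p => p.1 < p.2)) ∪ B.diag := by
    ext p
    rw [Finset.mem_union, Finset.mem_filter, Finset.mem_filter, Finset.mem_diag,
      Finset.mem_product]
    constructor
    · rintro ⟨hp, hle⟩
      rcases lt_or_eq_of_le hle with h | h
      · exact Or.inl ⟨hp, h⟩
      · exact Or.inr ⟨hp.1, h⟩
    · rintro (⟨hp, hlt⟩ | ⟨hp, he⟩)
      · exact ⟨hp, hlt.le⟩
      · exact ⟨⟨hp, he ▸ hp⟩, he.le⟩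
  have hdisj : Disjoint ((B ×ˢ B).filter (fun p => p.1 < p.2)) B.diag := by
    rw [Finset.disjoint_left]
    intro p hp hd
    rw [Finset.mem_filter] at hp
    rw [Finset.mem_diag] at hd
    exact absurd (hd.2 ▸ hp.2) (lt_irrefl _)
  rw [hsplit, Finset.card_union_of_disjoint hdisj, Finset.diag_card, card_tri]

end Tri

lemma InM_eq (a b : Fin n) (hab : a < b) :
    InM n a b
      = ((Finset.Iic a ×ˢ Finset.Iic a).filter (fun p => p.1 < p.2))
        ∪ ((Finset.Ioc a b ×ˢ Finset.Ioc a b).filter (fun p => p.1 < p.2))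
        ∪ ((Finset.Ioi b ×ˢ Finset.Ioi b).filter (fun p => p.1 < p.2)) := by
  have habv : (a : ℕ) < (b : ℕ) := hab
  ext p
  simp only [InM, Dm, cM, Finset.mem_filter, Finset.mem_union, Finset.mem_product,
    Finset.mem_univ, true_and, Finset.mem_Iic, Finset.mem_Ioc, Finset.mem_Ioi,
    Fin.lt_def, Fin.le_def]
  omega

lemma InP_eq (a b : Fin n) (hab : a < b) :
    InP n a b = (Finset.Ioi b ×ˢ Finset.Ioi b).filter (fun p => p.1 ≤ p.2) := by
  have habv : (a : ℕ) < (b : ℕ) := hab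
  ext p
  simp only [InP, Dp, cP, Finset.mem_filter, Finset.mem_product, Finset.mem_univ,
    true_and, Finset.mem_Ioi, Fin.lt_def, Fin.le_def]
  omega

lemma InM_card (a b : Fin n) (hab : a < b) :
    (InM n a b).card = ((a : ℕ) + 1).choose 2 + ((b : ℕ) - (a : ℕ)).choose 2
      + (n - 1 - (b : ℕ)).choose 2 := by
  rw [InM_eq n a b hab]
  have hd1 : Disjoint
      (((Finset.Iic a ×ˢ Finset.Iic a).filter (fun p : Fin n × Fin n => p.1 < p.2))
        ∪ ((Finset.Ioc a b ×ˢ Finset.Ioc a b).filter (fun p => p.1 < p.2)))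
      ((Finset.Ioi b ×ˢ Finset.Ioi b).filter (fun p => p.1 < p.2)) := by
    rw [Finset.disjoint_left]
    intro p hp hq
    have habv : (a : ℕ) < (b : ℕ) := hab
    simp only [Finset.mem_filter, Finset.mem_union, Finset.mem_product,
      Finset.mem_Iic, Finset.mem_Ioc, Finset.mem_Ioi, Fin.lt_def, Fin.le_def] at hp hq
    omega
  have hd2 : Disjoint
      ((Finset.Iic a ×ˢ Finset.Iic a).filter (fun p : Fin n × Fin n => p.1 < p.2))
      ((Finset.Ioc a b ×ˢ Finset.Ioc a b).filter (fun p => p.1 < p.2)) := by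
    rw [Finset.disjoint_left]
    intro p hp hq
    simp only [Finset.mem_filter, Finset.mem_product,
      Finset.mem_Iic, Finset.mem_Ioc, Fin.lt_def, Fin.le_def] at hp hq
    omega
  rw [Finset.card_union_of_disjoint hd1, Finset.card_union_of_disjoint hd2,
    card_tri, card_tri, card_tri, Fin.card_Iic, Fin.card_Ioc, Fin.card_Ioi]

lemma InP_card (a b : Fin n) (hab : a < b) :
    (InP n a b).card = (n - 1 - (b : ℕ)).choose 2 + (n - 1 - (b : ℕ)) := by
  rw [InP_eq n a b hab, card_tri_le, Fin.card_Ioi]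

lemma Dm_card : (Dm n).card = n.choose 2 := by
  have : Dm n = (Finset.univ ×ˢ Finset.univ).filter (fun p : Fin n × Fin n => p.1 < p.2) := by
    rw [Finset.univ_product_univ]; rfl
  rw [this, card_tri, Finset.card_univ, Fintype.card_fin]

lemma Dp_card : (Dp n).card = n.choose 2 + n := by
  have : Dp n = (Finset.univ ×ˢ Finset.univ).filter (fun p : Fin n × Fin n => p.1 ≤ p.2) := by
    rw [Finset.univ_product_univ]; rfl
  rw [this, card_tri_le, Finset.card_univ, Fintype.card_fin]

lemma choose2_double (m : ℕ) : 2 * m.choose 2 = m * (m - 1) := by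
  rw [Nat.choose_two_right]
  exact Nat.mul_div_cancel' (Nat.even_mul_pred_self m).two_dvd

lemma int_pp (p : ℤ) (hp : 0 ≤ p) : 0 ≤ p * (p - 1) := by
  rcases lt_or_ge p 1 with h | h
  · have : p = 0 := by omega
    simp [this]
  · exact mul_nonneg (by omega) (by omega)

lemma nlin (s t u m : ℤ) (hs : 1 ≤ s) (ht : 1 ≤ t) (hu : 0 ≤ u) (hm : s + t + u = m) :
    s * (s - 1) + t * (t - 1) + 2 * (u * u) + (8 * m - 8) ≤ 2 * (m * (m - 1)) + 2 * m := by
  nlinarith [int_pp (s - 1) (by omega), int_pp (t - 1) (by omega),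
    mul_nonneg (show (0:ℤ) ≤ s - 1 by omega) (show (0:ℤ) ≤ t - 1 by omega),
    mul_nonneg hu (show (0:ℤ) ≤ s - 1 by omega),
    mul_nonneg hu (show (0:ℤ) ≤ t - 1 by omega)]

lemma sq_split (u : ℕ) : u * (u - 1) + u = u * u := by
  cases u with
  | zero => rfl
  | succ k => simp [Nat.succ_sub_one]; ring

lemma arith_key (s t u N : ℕ) (hs : 1 ≤ s) (ht : 1 ≤ t) (hN : 2 ≤ N) (hsum : s + t + u = N) :
    s.choose 2 + t.choose 2 + (u.choose 2 + (u.choose 2 + u)) + (4 * N - 4)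
      ≤ N.choose 2 + (N.choose 2 + N) := by
  have ds := choose2_double s
  have dt := choose2_double t
  have du := choose2_double u
  have dN := choose2_double N
  have hu2 := sq_split u
  have key : s * (s - 1) + t * (t - 1) + 2 * (u * u) + (8 * N - 8)
      ≤ 2 * (N * (N - 1)) + 2 * N := by
    zify [hs, ht, show 1 ≤ N by omega, show 8 ≤ 8 * N by omega]
    exact nlin (s : ℤ) t u N (by omega) (by omega) (by omega) (by omega)
  omega

lemma outF_symm (a b : Fin n) : OutF n a b = OutF n b a := by
  rw [OutF, OutF]
  congr 1
  · apply Finset.filter_congr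
    intro p _
    rw [cM, cM]
    tauto
  · apply Finset.filter_congr
    intro p _
    rw [cP, cP]
    tauto

lemma out_card_ge (hn : 2 ≤ n) (a b : Fin n) (hab : a < b) : 4 * n - 4 ≤ (OutF n a b).card := by
  have h1 := out_card_split n a b
  rw [InM_card n a b hab, InP_card n a b hab, DD, Finset.card_disjSum, Dm_card, Dp_card] at h1
  have hbv := b.isLt
  have hav : (a : ℕ) < (b : ℕ) := hab
  have hkey := arith_key ((a : ℕ) + 1) ((b : ℕ) - (a : ℕ)) (n - 1 - (b : ℕ)) n
    (by omega) (by omega) hn (by omega)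
  omega

lemma out_card_eq (hn : 2 ≤ n) :
    (OutF n ⟨0, by omega⟩ ⟨1, by omega⟩).card = 4 * n - 4 := by
  have hab : (⟨0, by omega⟩ : Fin n) < ⟨1, by omega⟩ := Fin.mk_lt_mk.mpr Nat.zero_lt_one
  have h1 := out_card_split n ⟨0, by omega⟩ ⟨1, by omega⟩
  rw [InM_card n _ _ hab, InP_card n _ _ hab, DD, Finset.card_disjSum, Dm_card, Dp_card] at h1
  have hav : ((⟨0, by omega⟩ : Fin n) : ℕ) = 0 := rfl
  have hbv : ((⟨1, by omega⟩ : Fin n) : ℕ) = 1 := rfl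
  rw [hav, hbv] at h1
  have c1 : (0 + 1).choose 2 = 0 := rfl
  rw [c1] at h1
  have dn := choose2_double n
  have du := choose2_double (n - 1 - 1)
  have hrel : (n - 1 - 1) * (n - 1 - 1 - 1) + (4 * n - 6) = n * (n - 1) := by
    obtain ⟨m, rfl⟩ : ∃ m, n = m + 2 := ⟨n - 2, by omega⟩
    cases m with
    | zero => rfl
    | succ k =>
      simp only [show k + 1 + 2 - 1 - 1 = k + 1 by omega, show k + 1 + 2 - 1 = k + 2 by omega,
        show k + 1 + 2 - 1 - 1 - 1 = k by omega, Nat.succ_sub_one,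
        show 4 * (k + 1 + 2) - 6 = 4 * k + 6 by omega]
      ring
  omega

lemma main (hn : 2 ≤ n) :
    (⨅ p : {p : Fin n × Fin n // p.1 ≠ p.2},
      Set.ncard {v | v ∈ Sp' n ∧
        v ∉ Submodule.span ℝ (Set.range (al n) \ {al n p.val.1, al n p.val.2})}) = 4 * n - 4 := by
  have hne : Nonempty {p : Fin n × Fin n // p.1 ≠ p.2} :=
    ⟨⟨(⟨0, by omega⟩, ⟨1, by omega⟩), by simp [Fin.ext_iff]⟩⟩
  apply le_antisymm
  · have := ciInf_le (f := fun p : {p : Fin n × Fin n // p.1 ≠ p.2} =>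
      Set.ncard {v | v ∈ Sp' n ∧
        v ∉ Submodule.span ℝ (Set.range (al n) \ {al n p.val.1, al n p.val.2})})
      (OrderBot.bddBelow _) ⟨(⟨0, by omega⟩, ⟨1, by omega⟩), by simp [Fin.ext_iff]⟩
    refine this.trans_eq ?_
    rw [out_ncard]
    exact out_card_eq n hn
  · apply le_ciInf
    rintro ⟨⟨a, b⟩, hab⟩
    rw [out_ncard]
    rcases lt_or_gt_of_ne hab with h | h
    · exact out_card_ge n hn a b h
    · rw [outF_symm]
      exact out_card_ge n hn b a h

end Stmt7

/-- In the root system of type `C_n` (`n ≥ 2`), the minimum over unordered pairs of distinct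
simple roots `{α_i, α_j}` of the resonant codimension of `Π \ {α_i, α_j}` equals `4n - 4`. -/
theorem stmt7 (n : ℕ) (hn : 2 ≤ n) :
    let e : Fin n → (Fin n → ℝ) := fun i => Pi.single i 1
    let Sp : Set (Fin n → ℝ) :=
      {v | (∃ i j : Fin n, i < j ∧ (v = e i - e j ∨ v = e i + e j)) ∨
        ∃ i : Fin n, v = (2 : ℝ) • e i}
    let α : Fin n → (Fin n → ℝ) := fun k =>
      if h : (k : ℕ) + 1 < n then e k - e ⟨(k : ℕ) + 1, h⟩ else (2 : ℝ) • e k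
    let rc : Set (Fin n → ℝ) → ℕ := fun Pi' =>
      Set.ncard {v | v ∈ Sp ∧ v ∉ Submodule.span ℝ Pi'}
    (⨅ p : {p : Fin n × Fin n // p.1 ≠ p.2},
      rc (Set.range α \ {α p.val.1, α p.val.2})) = 4 * n - 4 := by
  intro e Sp α rc
  exact Stmt7.main n hn
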